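/- Let G be a group and D(G) the inductive family defined by: S ∈ D(G) if S ∩ S⁻¹ ≠ ∅, and if T ∪ {a} ∈ D(G) and T ∪ {b} ∈ D(G) then T ∪ {a*b} ∈ D(G). If S ∈ D(G), then there exists a finite subset S' ⊆ S with S' ∈ D(G). -/

import Mathlib

/-- The inductive family `D(G)` of subsets of a group `G`: a set is in `D(G)` if it meets
its own set of inverses, and the family is closed under the rule
`T ∪ {a}, T ∪ {b} ∈ D(G) ⟹ T ∪ {a*b} ∈ D(G)`. -/
inductive RightD {G : Type*} [Group G] : Set G → Prop
  | base (S : Set G) (a : G) (ha : a ∈ S) (hinv : a⁻¹ ∈ S) : RightD S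
  | step (T : Set G) (a b : G) (h1 : RightD (T ∪ {a})) (h2 : RightD (T ∪ {b})) :
      RightD (T ∪ {a * b})

theorem RightD.mono {G : Type*} [Group G] {S U : Set G} (hS : RightD S) (hSU : S ⊆ U) :
    RightD U := by
  induction hS generalizing U with
  | base S a ha hinv => exact RightD.base U a (hSU ha) (hSU hinv)
  | step T a b h1 h2 ih1 ih2 =>
    have hTU : T ⊆ U := fun x hx => hSU (Or.inl hx)
    have hab : a * b ∈ U := hSU (Or.inr rfl)
    have : RightD (U ∪ {a * b}) :=
      RightD.step U a b (ih1 (Set.union_subset_union_left _ hTU))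
        (ih2 (Set.union_subset_union_left _ hTU))
    simpa [Set.union_eq_self_of_subset_right (Set.singleton_subset_iff.mpr hab)] using this

theorem stmt4 {G : Type*} [Group G] {S : Set G} (hS : RightD S) :
    ∃ S' : Set G, S' ⊆ S ∧ S'.Finite ∧ RightD S' := by
  induction hS with
  | base S a ha hinv =>
    exact ⟨{a, a⁻¹}, by simp [Set.insert_subset_iff, ha, hinv],
      (Set.finite_singleton a⁻¹).insert a, RightD.base _ a (by simp) (by simp)⟩
  | step T a b h1 h2 ih1 ih2 =>
    obtain ⟨S1, hS1sub, hS1fin, hS1⟩ := ih1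
    obtain ⟨S2, hS2sub, hS2fin, hS2⟩ := ih2
    refine ⟨(S1 \ {a} ∪ S2 \ {b}) ∪ {a * b}, ?_, ?_, ?_⟩
    · apply Set.union_subset_union_left
      apply Set.union_subset
      · intro x hx
        rcases hS1sub hx.1 with h | h
        · exact h
        · exact absurd h hx.2
      · intro x hx
        rcases hS2sub hx.1 with h | h
        · exact h
        · exact absurd h hx.2
    · exact (((hS1fin.diff).union (hS2fin.diff)).union (Set.finite_singleton _))
    · refine RightD.step _ a b ?_ ?_
      · refine hS1.mono fun x hx => ?_
        by_cases hxa : x = a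
        · exact Or.inr hxa
        · exact Or.inl (Or.inl ⟨hx, hxa⟩)
      · refine hS2.mono fun x hx => ?_
        by_cases hxb : x = b
        · exact Or.inr hxb
        · exact Or.inl (Or.inr ⟨hx, hxb⟩)
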